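/- arXiv:1906.07902 — 2 statements merged into one kernel-verified Lean document; each statement's English description precedes it below -/
import Mathlib

section
/- Let A ∈ {0,1} and Z be jointly distributed random variables, and let H* := H(A | Z) be the conditional Shannon entropy of A given Z (in bits). Then for any (possibly randomized) adversary Â : Z → {0,1} such that Â is conditionally independent of A given Z, the inference error satisfies Pr(Â ≠ A) ≥ H* / (2 log₂(6 / H*)). -/
open MeasureTheory ProbabilityTheory
open scoped ENNReal

/-- Binary entropy in bits (base-2 logarithm, with the convention `0 logb 0 = 0`). -/
noncomputable def binEnt2 (p : ℝ) : ℝ :=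
  -(p * Real.logb 2 p) - (1 - p) * Real.logb 2 (1 - p)

/-- Conditional Shannon entropy `H(A | Z)` (in bits) of the binary attribute `A`
given the discrete representation `Z`. -/
noncomputable def condEnt2 {Ω 𝒵 : Type*} [MeasurableSpace Ω] (μ : Measure Ω)
    (A : Ω → Bool) (Z : Ω → 𝒵) : ℝ :=
  ∑' z : 𝒵, (μ {ω | Z ω = z}).toReal *
    binEnt2 ((ProbabilityTheory.cond μ {ω | Z ω = z}) {ω | A ω = true}).toReal

lemma mul_log_div_le (a b : ℝ) (ha : 0 < a) (hb : 0 < b) : a * Real.log (b / a) ≤ b - a := by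
  have h := Real.log_le_sub_one_of_pos (show (0:ℝ) < b / a by positivity)
  calc a * Real.log (b/a) ≤ a * (b/a - 1) := by nlinarith
    _ = b - a := by field_simp

lemma binEnt2_symm (p : ℝ) : binEnt2 (1-p) = binEnt2 p := by
  unfold binEnt2; ring_nf

lemma binEnt2_nonneg (p : ℝ) (h0 : 0 ≤ p) (h1 : p ≤ 1) : 0 ≤ binEnt2 p := by
  have l1 := Real.logb_nonpos (by norm_num : (1:ℝ) < 2) h0 h1
  have l2 := Real.logb_nonpos (by norm_num : (1:ℝ) < 2) (by linarith : (0:ℝ) ≤ 1 - p) (by linarith)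
  unfold binEnt2
  nlinarith

lemma binEnt2_le_linear (p E : ℝ) (hp0 : 0 ≤ p) (hp1 : p ≤ 1) (hE0 : 0 < E) :
    binEnt2 p ≤ min p (1-p) * Real.logb 2 (1/E) + E / Real.log 2 := by
  have hlog2 : (0:ℝ) < Real.log 2 := Real.log_pos (by norm_num)
  wlog hm : p ≤ 1 - p generalizing p
  · have := this (1-p) (by linarith) (by linarith) (by linarith)
    rw [binEnt2_symm] at this
    rw [min_comm]
    simpa using this
  rw [min_eq_left hm]
  rcases eq_or_lt_of_le hp0 with h0 | h0
  · simp [← h0, binEnt2]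
    positivity
  · have h1p : 0 < 1 - p := by linarith
    have hb : binEnt2 p * Real.log 2 = -(p * Real.log p) - (1-p) * Real.log (1-p) := by
      unfold binEnt2 Real.logb; field_simp
    have h1 : -((1-p) * Real.log (1-p)) ≤ p := by
      have := mul_log_div_le (1-p) 1 h1p one_pos
      rw [Real.log_div one_ne_zero (by linarith)] at this
      simp at this; linarith
    have h2 : -(p * Real.log p) ≤ p * Real.log (1/E) + (E - p) := by
      have := mul_log_div_le p E h0 hE0
      rw [Real.log_div (by positivity) (by linarith)] at this
      rw [Real.log_div one_ne_zero (by positivity)]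
      simp at this ⊢; linarith
    have hkey : binEnt2 p * Real.log 2 ≤ p * Real.log (1/E) + E := by
      rw [hb]; linarith
    rw [Real.logb, ← sub_nonneg]
    have expand : p * (Real.log (1/E) / Real.log 2) + E / Real.log 2 - binEnt2 p
        = (p * Real.log (1/E) + E - binEnt2 p * Real.log 2) / Real.log 2 := by
      field_simp
    rw [expand]
    apply div_nonneg _ hlog2.le
    linarith

lemma one_add_logb_le (L : ℝ) (hL : 2 ≤ L) : 1 + Real.logb 2 L ≤ L := by
  have h2 : (0.6931471803:ℝ) < Real.log 2 := Real.log_two_gt_d9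
  have h := Real.log_le_sub_one_of_pos (show (0:ℝ) < L / 2 by linarith)
  have hlog : Real.log L = Real.log 2 + Real.log (L/2) := by
    rw [← Real.log_mul (by norm_num) (by linarith)]; ring_nf
  have key : Real.log L / Real.log 2 ≤ L - 1 := by
    rw [div_le_iff₀ (by linarith : (0:ℝ) < Real.log 2), hlog]; nlinarith
  rw [Real.logb]; linarith

lemma final_arith (H E : ℝ) (hH0 : 0 < H) (hH1 : H ≤ 1) (hE0 : 0 < E) (hE1 : E ≤ 1)
    (h : H ≤ E * Real.logb 2 (6 / E)) :
    H / (2 * Real.logb 2 (6 / H)) ≤ E := by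
  set L := Real.logb 2 (6 / H) with hLdef
  have hL2 : 2 ≤ L := by
    rw [hLdef, Real.le_logb_iff_rpow_le (by norm_num) (by positivity)]
    rw [show ((2:ℝ)^(2:ℝ)) = 4 by
      rw [show (2:ℝ) = ((2:ℕ):ℝ) by norm_num, Real.rpow_natCast]; norm_num]
    rw [le_div_iff₀ hH0]; linarith
  have hLpos : 0 < L := by linarith
  set t := H / (2 * L) with htdef
  have ht0 : 0 < t := by positivity
  have htH : t < H := by
    rw [htdef, div_lt_iff₀ (by linarith)]; nlinarith
  by_contra hcon
  push_neg at hcon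
  have hEt : E < t := hcon
  have hlog2pos : (0:ℝ) < Real.log 2 := Real.log_pos (by norm_num)
  have htang : E * Real.log (t / E) ≤ t - E := mul_log_div_le E t hE0 ht0
  have hlog6t : 1 < Real.log (6 / t) := by
    have he : Real.exp 1 < 3 := Real.exp_one_lt_d9.trans (by norm_num)
    have h3 : (3:ℝ) ≤ 6 / t := by rw [le_div_iff₀ ht0]; nlinarith
    calc (1:ℝ) = Real.log (Real.exp 1) := (Real.log_exp 1).symm
      _ < Real.log (6 / t) := Real.log_lt_log (Real.exp_pos 1) (by linarith)
  have hnat : E * Real.log (6 / E) < t * Real.log (6 / t) := by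
    have hexp : Real.log (6/E) = Real.log (6/t) + Real.log (t/E) := by
      rw [← Real.log_mul (by positivity) (by positivity)]
      congr 1; field_simp
    have h1 : (Real.log (6/t) - 1) * (E - t) < 0 :=
      mul_neg_of_pos_of_neg (by linarith) (by linarith)
    nlinarith [htang]
  have hblog : E * Real.logb 2 (6 / E) < t * Real.logb 2 (6 / t) := by
    rw [Real.logb, Real.logb, ← mul_div_assoc, ← mul_div_assoc]
    exact (div_lt_div_iff_of_pos_right hlog2pos).mpr hnat
  have hfin : t * Real.logb 2 (6 / t) ≤ H := by
    have h6t : (6:ℝ)/t = (6/H) * (2*L) := by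
      rw [htdef]; field_simp
    have hlb : Real.logb 2 (6/t) = L + (1 + Real.logb 2 L) := by
      rw [h6t, Real.logb_mul (by positivity) (by positivity),
        Real.logb_mul (by norm_num) (by positivity)]
      norm_num [Real.logb_self_eq_one]
      exact hLdef.symm
    rw [hlb, htdef, div_mul_eq_mul_div, div_le_iff₀ (by linarith : (0:ℝ) < 2*L)]
    have := one_add_logb_le L hL2
    nlinarith
  linarith

/-- for any (possibly randomized) adversary `Â` that is conditionally
independent of `A` given `Z`, with `H* := H(A | Z)` in bits satisfying `0 < H* ≤ 1`,
the inference error satisfies `Pr(Â ≠ A) ≥ H* / (2 log₂(6 / H*))`. -/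
theorem adversary_error_lower_bound
    {Ω 𝒵 : Type*} [MeasurableSpace Ω] [MeasurableSpace 𝒵]
    [MeasurableSingletonClass 𝒵] [Countable 𝒵]
    (μ : Measure Ω) [IsProbabilityMeasure μ]
    (A Ahat : Ω → Bool) (Z : Ω → 𝒵)
    (hA : Measurable A) (hAhat : Measurable Ahat) (hZ : Measurable Z)
    (hcondindep : ∀ (z : 𝒵) (a b : Bool),
      μ {ω | A ω = a ∧ Ahat ω = b ∧ Z ω = z} * μ {ω | Z ω = z}
        = μ {ω | A ω = a ∧ Z ω = z} * μ {ω | Ahat ω = b ∧ Z ω = z})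
    (hpos : 0 < condEnt2 μ A Z) (hle : condEnt2 μ A Z ≤ 1) :
    condEnt2 μ A Z / (2 * Real.logb 2 (6 / condEnt2 μ A Z))
      ≤ (μ {ω | Ahat ω ≠ A ω}).toReal := by
  classical
  -- basic measurable sets
  have hmSz : ∀ z : 𝒵, MeasurableSet {ω | Z ω = z} :=
    fun z => hZ (measurableSet_singleton z)
  have hmSA : ∀ (a : Bool) (z : 𝒵), MeasurableSet {ω | A ω = a ∧ Z ω = z} := by
    intro a z
    have : {ω | A ω = a ∧ Z ω = z} = {ω | A ω = a} ∩ {ω | Z ω = z} := rfl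
    rw [this]; exact (hA (measurableSet_singleton a)).inter (hmSz z)
  have hmSB : ∀ (b : Bool) (z : 𝒵), MeasurableSet {ω | Ahat ω = b ∧ Z ω = z} := by
    intro b z
    have : {ω | Ahat ω = b ∧ Z ω = z} = {ω | Ahat ω = b} ∩ {ω | Z ω = z} := rfl
    rw [this]; exact (hAhat (measurableSet_singleton b)).inter (hmSz z)
  have hmT : ∀ (a b : Bool) (z : 𝒵), MeasurableSet {ω | A ω = a ∧ Ahat ω = b ∧ Z ω = z} := by
    intro a b z
    have : {ω | A ω = a ∧ Ahat ω = b ∧ Z ω = z}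
        = {ω | A ω = a} ∩ ({ω | Ahat ω = b} ∩ {ω | Z ω = z}) := rfl
    rw [this]
    exact (hA (measurableSet_singleton a)).inter
      ((hAhat (measurableSet_singleton b)).inter (hmSz z))
  have hmErr : MeasurableSet {ω | Ahat ω ≠ A ω} := by
    have : {ω | Ahat ω ≠ A ω}
        = ({ω | Ahat ω = true} ∩ {ω | A ω = false}) ∪ ({ω | Ahat ω = false} ∩ {ω | A ω = true}) := by
      ext ω
      simp only [Set.mem_setOf_eq, Set.mem_union, Set.mem_inter_iff]
      cases hh : Ahat ω <;> cases hh' : A ω <;> simp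
    rw [this]
    exact ((hAhat (measurableSet_singleton true)).inter (hA (measurableSet_singleton false))).union
      ((hAhat (measurableSet_singleton false)).inter (hA (measurableSet_singleton true)))
  -- finiteness
  have hνtop : ∀ z : 𝒵, μ {ω | Z ω = z} ≠ ⊤ := fun z => measure_ne_top μ _
  -- additivity over A values
  have ha_sum : ∀ z : 𝒵,
      μ {ω | A ω = true ∧ Z ω = z} + μ {ω | A ω = false ∧ Z ω = z} = μ {ω | Z ω = z} := by
    intro z
    rw [← measure_union ?hd (hmSA false z)]
    · congr 1
      ext ω
      simp only [Set.mem_union, Set.mem_setOf_eq]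
      cases h : A ω <;> simp
    case hd =>
      rw [Set.disjoint_left]
      rintro ω ⟨h1, -⟩ ⟨h2, -⟩
      simp [h1] at h2
  have hb_sum : ∀ z : 𝒵,
      μ {ω | Ahat ω = true ∧ Z ω = z} + μ {ω | Ahat ω = false ∧ Z ω = z} = μ {ω | Z ω = z} := by
    intro z
    rw [← measure_union ?hd (hmSB false z)]
    · congr 1
      ext ω
      simp only [Set.mem_union, Set.mem_setOf_eq]
      cases h : Ahat ω <;> simp
    case hd =>
      rw [Set.disjoint_left]
      rintro ω ⟨h1, -⟩ ⟨h2, -⟩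
      simp [h1] at h2
  -- error decomposition per z
  have herrz : ∀ z : 𝒵,
      μ ({ω | Ahat ω ≠ A ω} ∩ {ω | Z ω = z})
        = μ {ω | A ω = true ∧ Ahat ω = false ∧ Z ω = z}
          + μ {ω | A ω = false ∧ Ahat ω = true ∧ Z ω = z} := by
    intro z
    rw [← measure_union ?hd (hmT false true z)]
    · congr 1
      ext ω
      simp only [Set.mem_inter_iff, Set.mem_union, Set.mem_setOf_eq]
      cases h : A ω <;> cases h' : Ahat ω <;> simp
    case hd =>
      rw [Set.disjoint_left]
      rintro ω ⟨h1, -, -⟩ ⟨h2, -, -⟩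
      simp [h1] at h2
  -- key per-z bound
  have hkey : ∀ z : 𝒵,
      min (μ {ω | A ω = true ∧ Z ω = z}) (μ {ω | A ω = false ∧ Z ω = z})
        ≤ μ ({ω | Ahat ω ≠ A ω} ∩ {ω | Z ω = z}) := by
    intro z
    by_cases hz : μ {ω | Z ω = z} = 0
    · have h1 : μ {ω | A ω = true ∧ Z ω = z} ≤ μ {ω | Z ω = z} :=
        measure_mono (fun ω h => h.2)
      exact le_trans ((min_le_left _ _).trans (h1.trans hz.le)) (zero_le)
    · rw [← ENNReal.mul_le_mul_iff_left hz (hνtop z)]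
      calc min (μ {ω | A ω = true ∧ Z ω = z}) (μ {ω | A ω = false ∧ Z ω = z}) * μ {ω | Z ω = z}
          = min (μ {ω | A ω = true ∧ Z ω = z}) (μ {ω | A ω = false ∧ Z ω = z})
              * (μ {ω | Ahat ω = false ∧ Z ω = z} + μ {ω | Ahat ω = true ∧ Z ω = z}) := by
            rw [add_comm, hb_sum z]
        _ = min (μ {ω | A ω = true ∧ Z ω = z}) (μ {ω | A ω = false ∧ Z ω = z})
              * μ {ω | Ahat ω = false ∧ Z ω = z}
            + min (μ {ω | A ω = true ∧ Z ω = z}) (μ {ω | A ω = false ∧ Z ω = z})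
              * μ {ω | Ahat ω = true ∧ Z ω = z} := mul_add _ _ _
        _ ≤ μ {ω | A ω = true ∧ Z ω = z} * μ {ω | Ahat ω = false ∧ Z ω = z}
            + μ {ω | A ω = false ∧ Z ω = z} * μ {ω | Ahat ω = true ∧ Z ω = z} :=
            add_le_add (mul_le_mul_left (min_le_left _ _) _)
              (mul_le_mul_left (min_le_right _ _) _)
        _ = μ {ω | A ω = true ∧ Ahat ω = false ∧ Z ω = z} * μ {ω | Z ω = z}
            + μ {ω | A ω = false ∧ Ahat ω = true ∧ Z ω = z} * μ {ω | Z ω = z} := by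
            rw [hcondindep z true false, hcondindep z false true]
        _ = μ ({ω | Ahat ω ≠ A ω} ∩ {ω | Z ω = z}) * μ {ω | Z ω = z} := by
            rw [herrz z]; ring
  -- global decompositions
  have herr_tsum : μ {ω | Ahat ω ≠ A ω} = ∑' z : 𝒵, μ ({ω | Ahat ω ≠ A ω} ∩ {ω | Z ω = z}) := by
    have hU : ⋃ z : 𝒵, ({ω | Ahat ω ≠ A ω} ∩ {ω | Z ω = z}) = {ω | Ahat ω ≠ A ω} := by
      ext ω
      simp only [Set.mem_iUnion, Set.mem_inter_iff, Set.mem_setOf_eq]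
      exact ⟨fun ⟨z, h, _⟩ => h, fun h => ⟨Z ω, h, rfl⟩⟩
    conv_lhs => rw [← hU]
    rw [measure_iUnion ?hd (fun z => hmErr.inter (hmSz z))]
    case hd =>
      intro i j hij
      rw [Function.onFun, Set.disjoint_left]
      rintro ω ⟨-, h1⟩ ⟨-, h2⟩
      exact hij (h1 ▸ h2 ▸ rfl)
  have hν_tsum : ∑' z : 𝒵, μ {ω | Z ω = z} = 1 := by
    have hU : ⋃ z : 𝒵, {ω | Z ω = z} = Set.univ := by
      ext ω; simp only [Set.mem_iUnion, Set.mem_setOf_eq, Set.mem_univ, iff_true]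
      exact ⟨Z ω, rfl⟩
    rw [← measure_iUnion ?hd hmSz]
    · rw [hU, measure_univ]
    case hd =>
      intro i j hij
      rw [Function.onFun, Set.disjoint_left]
      rintro ω h1 h2
      exact hij (h1 ▸ h2 ▸ rfl)
  -- conditional probability facts
  have hpz : ∀ z : 𝒵, μ {ω | Z ω = z} ≠ 0 →
      (ProbabilityTheory.cond μ {ω | Z ω = z} {ω | A ω = true})
        = (μ {ω | Z ω = z})⁻¹ * μ {ω | A ω = true ∧ Z ω = z} := by
    intro z hz
    have hs : {ω | Z ω = z} ∩ {ω | A ω = true} = {ω | A ω = true ∧ Z ω = z} := by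
      ext ω
      simp only [Set.mem_inter_iff, Set.mem_setOf_eq]
      tauto
    rw [cond_apply (hmSz z), hs]
  -- real-valued quantities
  set p : 𝒵 → ℝ :=
    fun z => ((ProbabilityTheory.cond μ {ω | Z ω = z}) {ω | A ω = true}).toReal with hpdef
  set νR : 𝒵 → ℝ := fun z => (μ {ω | Z ω = z}).toReal with hνRdef
  set mR : 𝒵 → ℝ :=
    fun z => (min (μ {ω | A ω = true ∧ Z ω = z}) (μ {ω | A ω = false ∧ Z ω = z})).toReal with hmRdef
  have hCE : condEnt2 μ A Z = ∑' z : 𝒵, νR z * binEnt2 (p z) := rfl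
  -- facts for z with positive mass
  have hpval : ∀ z : 𝒵, μ {ω | Z ω = z} ≠ 0 →
      p z = (μ {ω | A ω = true ∧ Z ω = z}).toReal / νR z := by
    intro z hz
    rw [hpdef]
    simp only
    rw [hpz z hz, ENNReal.toReal_mul, ENNReal.toReal_inv, ← div_eq_inv_mul]
  have hadd : ∀ z : 𝒵,
      (μ {ω | A ω = true ∧ Z ω = z}).toReal + (μ {ω | A ω = false ∧ Z ω = z}).toReal = νR z := by
    intro z
    rw [hνRdef]
    simp only
    rw [← ENNReal.toReal_add (measure_ne_top μ _) (measure_ne_top μ _), ha_sum z]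
  have hp01 : ∀ z : 𝒵, μ {ω | Z ω = z} ≠ 0 → 0 ≤ p z ∧ p z ≤ 1 := by
    intro z hz
    have hν0 : 0 < νR z := ENNReal.toReal_pos hz (hνtop z)
    refine ⟨ENNReal.toReal_nonneg, ?_⟩
    rw [hpval z hz, div_le_one hν0]
    have := ENNReal.toReal_nonneg (a := μ {ω | A ω = false ∧ Z ω = z})
    linarith [hadd z]
  have h1p : ∀ z : 𝒵, μ {ω | Z ω = z} ≠ 0 →
      1 - p z = (μ {ω | A ω = false ∧ Z ω = z}).toReal / νR z := by
    intro z hz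
    have hν0 : 0 < νR z := ENNReal.toReal_pos hz (hνtop z)
    rw [hpval z hz, eq_div_iff hν0.ne']
    have := hadd z
    field_simp
    linarith
  have hminid : ∀ z : 𝒵, μ {ω | Z ω = z} ≠ 0 →
      νR z * min (p z) (1 - p z) = mR z := by
    intro z hz
    have hν0 : 0 < νR z := ENNReal.toReal_pos hz (hνtop z)
    rw [h1p z hz, hpval z hz, min_div_div_right hν0.le, mul_div_cancel₀ _ hν0.ne', hmRdef]
    simp only
    rw [ENNReal.toReal_min (measure_ne_top μ _) (measure_ne_top μ _)]
  -- vanishing terms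
  have hterm_zero : ∀ z : 𝒵,
      min (μ {ω | A ω = true ∧ Z ω = z}) (μ {ω | A ω = false ∧ Z ω = z}) = 0 →
      νR z * binEnt2 (p z) = 0 := by
    intro z hmin
    by_cases hz : μ {ω | Z ω = z} = 0
    · rw [hνRdef]; simp [hz]
    · have : μ {ω | A ω = true ∧ Z ω = z} = 0 ∨ μ {ω | A ω = false ∧ Z ω = z} = 0 := by
        rcases le_total (μ {ω | A ω = true ∧ Z ω = z}) (μ {ω | A ω = false ∧ Z ω = z}) with h | h
        · left; rwa [min_eq_left h] at hmin
        · right; rwa [min_eq_right h] at hmin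
      rcases this with h | h
      · have : p z = 0 := by rw [hpval z hz, h]; simp
        rw [this]
        simp [binEnt2]
      · have h1 : μ {ω | A ω = true ∧ Z ω = z} = μ {ω | Z ω = z} := by
          rw [← ha_sum z, h, add_zero]
        have : p z = 1 := by
          rw [hpdef]
          simp only
          rw [hpz z hz, h1, ENNReal.inv_mul_cancel hz (hνtop z), ENNReal.toReal_one]
        rw [this]
        simp [binEnt2]
  -- positive error probability
  have hErrne : μ {ω | Ahat ω ≠ A ω} ≠ 0 := by
    intro h0
    have hmin0 : ∀ z : 𝒵,
        min (μ {ω | A ω = true ∧ Z ω = z}) (μ {ω | A ω = false ∧ Z ω = z}) = 0 := by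
      intro z
      refine le_antisymm ((hkey z).trans ?_) (zero_le)
      exact le_trans (measure_mono Set.inter_subset_left) h0.le
    have : condEnt2 μ A Z = 0 := by
      rw [hCE, tsum_congr (fun z => hterm_zero z (hmin0 z))]
      exact tsum_zero
    linarith
  set E := (μ {ω | Ahat ω ≠ A ω}).toReal with hEdef
  have hE0 : 0 < E := ENNReal.toReal_pos hErrne (measure_ne_top μ _)
  have hE1 : E ≤ 1 := by
    rw [hEdef]
    have : (μ {ω | Ahat ω ≠ A ω}).toReal ≤ (1 : ℝ≥0∞).toReal :=
      ENNReal.toReal_mono ENNReal.one_ne_top prob_le_one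
    simpa using this
  -- per-term bound
  have hterm : ∀ z : 𝒵, νR z * binEnt2 (p z)
      ≤ mR z * Real.logb 2 (1/E) + νR z * (E / Real.log 2) := by
    intro z
    by_cases hz : μ {ω | Z ω = z} = 0
    · have ha0 : μ {ω | A ω = true ∧ Z ω = z} = 0 :=
        le_antisymm (le_trans (measure_mono fun ω h => h.2) hz.le) (zero_le)
      have hm0 : mR z = 0 := by
        rw [hmRdef]; simp [ha0]
      have hν0 : νR z = 0 := by rw [hνRdef]; simp [hz]
      rw [hm0, hν0]; simp
    · obtain ⟨hp0, hp1⟩ := hp01 z hz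
      calc νR z * binEnt2 (p z)
          ≤ νR z * (min (p z) (1 - p z) * Real.logb 2 (1/E) + E / Real.log 2) :=
            mul_le_mul_of_nonneg_left (binEnt2_le_linear (p z) E hp0 hp1 hE0)
              ENNReal.toReal_nonneg
        _ = (νR z * min (p z) (1 - p z)) * Real.logb 2 (1/E) + νR z * (E / Real.log 2) := by
            ring
        _ = mR z * Real.logb 2 (1/E) + νR z * (E / Real.log 2) := by rw [hminid z hz]
  -- summability
  have hsumν : Summable νR := ENNReal.summable_toReal (by rw [hν_tsum]; exact ENNReal.one_ne_top)
  have hνR1 : ∑' z : 𝒵, νR z = 1 := by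
    rw [hνRdef, ← ENNReal.tsum_toReal_eq hνtop, hν_tsum, ENNReal.toReal_one]
  have hmin_le : ∑' z : 𝒵,
      min (μ {ω | A ω = true ∧ Z ω = z}) (μ {ω | A ω = false ∧ Z ω = z})
        ≤ μ {ω | Ahat ω ≠ A ω} :=
    le_of_le_of_eq (ENNReal.tsum_le_tsum hkey) herr_tsum.symm
  have hmintop : ∑' z : 𝒵,
      min (μ {ω | A ω = true ∧ Z ω = z}) (μ {ω | A ω = false ∧ Z ω = z}) ≠ ⊤ :=
    ne_top_of_le_ne_top (measure_ne_top μ _) hmin_le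
  have hsumm : Summable mR := ENNReal.summable_toReal hmintop
  have hMle : ∑' z : 𝒵, mR z ≤ E := by
    rw [hmRdef, ← ENNReal.tsum_toReal_eq
      (fun z => ne_top_of_le_ne_top (measure_ne_top μ _) (min_le_left _ _))]
    exact ENNReal.toReal_mono (measure_ne_top μ _) hmin_le
  have hnonneg : ∀ z : 𝒵, 0 ≤ νR z * binEnt2 (p z) := by
    intro z
    by_cases hz : μ {ω | Z ω = z} = 0
    · rw [hνRdef]; simp [hz]
    · obtain ⟨hp0, hp1⟩ := hp01 z hz
      exact mul_nonneg ENNReal.toReal_nonneg (binEnt2_nonneg _ hp0 hp1)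
  have hRsum : Summable (fun z : 𝒵 => mR z * Real.logb 2 (1/E) + νR z * (E / Real.log 2)) :=
    (hsumm.mul_right _).add (hsumν.mul_right _)
  have hLsum : Summable (fun z : 𝒵 => νR z * binEnt2 (p z)) :=
    Summable.of_nonneg_of_le hnonneg hterm hRsum
  have h1 : condEnt2 μ A Z
      ≤ ∑' z : 𝒵, (mR z * Real.logb 2 (1/E) + νR z * (E / Real.log 2)) := by
    rw [hCE]
    exact Summable.tsum_le_tsum hterm hLsum hRsum
  have h2 : ∑' z : 𝒵, (mR z * Real.logb 2 (1/E) + νR z * (E / Real.log 2))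
      = (∑' z : 𝒵, mR z) * Real.logb 2 (1/E) + E / Real.log 2 := by
    rw [Summable.tsum_add (hsumm.mul_right _) (hsumν.mul_right _), tsum_mul_right, tsum_mul_right,
      hνR1, one_mul]
  have hc1 : 0 ≤ Real.logb 2 (1/E) := by
    apply Real.logb_nonneg (by norm_num)
    rw [le_div_iff₀ hE0]
    linarith
  have h3 : condEnt2 μ A Z ≤ E * Real.logb 2 (1/E) + E / Real.log 2 := by
    have := mul_le_mul_of_nonneg_right hMle hc1
    rw [h2] at h1
    linarith
  have hlog2pos : (0:ℝ) < Real.log 2 := Real.log_pos (by norm_num)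
  have h4 : E * Real.logb 2 (1/E) + E / Real.log 2 ≤ E * Real.logb 2 (6/E) := by
    have hsplit : Real.logb 2 (6/E) = Real.logb 2 6 + Real.logb 2 (1/E) := by
      rw [show (6:ℝ)/E = 6 * (1/E) by ring, Real.logb_mul (by norm_num) (by positivity)]
    have hlog6 : 1 ≤ Real.log 6 := by
      have he : Real.exp 1 < 3 := Real.exp_one_lt_d9.trans (by norm_num)
      calc (1:ℝ) = Real.log (Real.exp 1) := (Real.log_exp 1).symm
        _ ≤ Real.log 6 := Real.log_le_log (Real.exp_pos 1) (by linarith)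
    have h16 : 1 / Real.log 2 ≤ Real.logb 2 6 := by
      rw [Real.logb]
      exact (div_le_div_iff_of_pos_right hlog2pos).mpr hlog6
    have := mul_le_mul_of_nonneg_left h16 hE0.le
    rw [hsplit]
    rw [mul_one_div] at this
    nlinarith
  exact final_arith _ E hpos hle hE0 hE1 (h3.trans h4)
end

section
/- Let H₂⁻¹ : [0,1] → [0, 1/2] be the inverse of the binary entropy function. Then for all s ∈ (0, 1], H₂⁻¹(s) ≥ s / (2 log₂(6/s)). -/
/-- The inverse of the binary entropy function `H₂ : [0, 1/2] → [0, 1]`. -/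
noncomputable def invBinEnt2 (s : ℝ) : ℝ :=
  sInf {p : ℝ | p ∈ Set.Icc (0:ℝ) (1/2) ∧ binEnt2 p = s}

open Real in
lemma binEnt2_eq (p : ℝ) : binEnt2 p = Real.binEntropy p / Real.log 2 := by
  simp only [binEnt2, Real.binEntropy, Real.logb, Real.log_inv]
  ring

open Real in
lemma binEnt2_mono : StrictMonoOn binEnt2 (Set.Icc 0 (1/2)) := by
  have h2 : (0:ℝ) < log 2 := log_pos one_lt_two
  intro x hx y hy hxy
  rw [binEnt2_eq, binEnt2_eq, div_lt_div_iff_of_pos_right h2]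
  exact binEntropy_strictMonoOn (by simpa [one_div] using hx) (by simpa [one_div] using hy) hxy

/-- Calabro: for all `s ∈ (0, 1]`, `H₂⁻¹(s) ≥ s / (2 log₂(6/s))`. -/
theorem invBinEnt2_ge (s : ℝ) (h0 : 0 < s) (h1 : s ≤ 1) :
    s / (2 * Real.logb 2 (6 / s)) ≤ invBinEnt2 s := by
  have hlog2 : (0:ℝ) < Real.log 2 := Real.log_pos one_lt_two
  have hlog2' : (1:ℝ)/3 < Real.log 2 := by
    have := Real.log_two_gt_d9; linarith
  have h6s : (0:ℝ) < 6 / s := by positivity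
  set a := Real.log (6 / s) with ha
  have h6s2 : (2:ℝ) ≤ 6 / s := by
    rw [le_div_iff₀ h0]; linarith
  have ha2 : Real.log 2 ≤ a := Real.log_le_log (by norm_num) h6s2
  have ha0 : 0 < a := lt_of_lt_of_le hlog2 ha2
  set q := s / (2 * Real.logb 2 (6/s)) with hqdef
  have hq_eq : q = s * Real.log 2 / (2 * a) := by
    rw [hqdef, Real.logb]; field_simp; rw [← ha]; exact div_self ha0.ne'
  have hq0 : 0 < q := by rw [hq_eq]; positivity
  have hq2 : q ≤ 1/2 := by
    rw [hq_eq, div_le_iff₀ (by positivity)]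
    nlinarith [mul_le_mul_of_nonneg_left ha2 h0.le]
  have hexp : Real.exp a = 6 / s := Real.exp_log h6s
  have he : (0:ℝ) < Real.exp 1 := Real.exp_pos 1
  have hae : a * Real.exp 1 ≤ 6 / s := by
    have h := Real.log_le_sub_one_of_pos (show 0 < (6/s)/Real.exp 1 by positivity)
    rw [Real.log_div (by positivity) (ne_of_gt he), Real.log_exp] at h
    have h' : a ≤ 6/s/Real.exp 1 := by linarith
    calc a * Real.exp 1 ≤ (6/s/Real.exp 1) * Real.exp 1 := by nlinarith
    _ = 6/s := by field_simp
  -- Key inequality: log q⁻¹ + 1 ≤ 2a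
  have hK : Real.log q⁻¹ + 1 ≤ 2 * a := by
    have h1 : q⁻¹ = 2 * a / (s * Real.log 2) := by
      rw [hq_eq]; field_simp
    have h2 : 2 * a / (s * Real.log 2) ≤ Real.exp (2*a - 1) := by
      have hee : Real.exp (2*a-1) = (6/s) * (6/s) / Real.exp 1 := by
        rw [show (2*a-1) = a + a - 1 by ring, Real.exp_sub, Real.exp_add, hexp]
      rw [hee, div_le_div_iff₀ (by positivity) he]
      have h3 : a * s * Real.exp 1 ≤ 6 := by
        have := mul_le_mul_of_nonneg_right hae h0.le
        calc a * s * Real.exp 1 = a * Real.exp 1 * s := by ring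
        _ ≤ 6/s * s := this
        _ = 6 := by field_simp
      have hRHS : 6/s*(6/s)*(s*Real.log 2) = 36 * Real.log 2 / s := by
        field_simp; ring
      rw [hRHS, le_div_iff₀ h0]
      have h5 : (12:ℝ) ≤ 36 * Real.log 2 := by linarith
      nlinarith [h3, h5]
    have h6 := Real.log_le_log (by rw [← h1]; positivity) h2
    rw [Real.log_exp] at h6
    rw [h1]; linarith
  -- binEnt2 q ≤ s
  have h1q : 0 < 1 - q := by linarith
  have hbound : binEnt2 q ≤ s := by
    rw [binEnt2_eq, div_le_iff₀ hlog2, Real.binEntropy]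
    have hstep1 : (1-q) * Real.log (1-q)⁻¹ ≤ q := by
      have h := Real.log_le_sub_one_of_pos (show 0 < (1-q)⁻¹ by positivity)
      have h' : (1-q)⁻¹ - 1 = q / (1-q) := by field_simp; ring
      rw [h'] at h
      calc (1-q) * Real.log (1-q)⁻¹ ≤ (1-q) * (q/(1-q)) := by nlinarith
      _ = q := by field_simp
    have hstep2 : q * Real.log q⁻¹ ≤ q * (2*a - 1) := by
      apply mul_le_mul_of_nonneg_left _ hq0.le; linarith [hK]
    have h2aq : 2 * a * q = s * Real.log 2 := by
      rw [hq_eq]; field_simp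
    nlinarith
  -- the defining set is nonempty
  have hcont : Continuous binEnt2 := by
    have : binEnt2 = fun p => Real.binEntropy p / Real.log 2 := funext binEnt2_eq
    rw [this]
    exact Real.binEntropy_continuous.div_const _
  have hmem : s ∈ Set.Icc (binEnt2 0) (binEnt2 (1/2)) := by
    have e0 : binEnt2 0 = 0 := by simp [binEnt2]
    have e1 : binEnt2 (1/2) = 1 := by
      rw [binEnt2_eq, show (1:ℝ)/2 = 2⁻¹ by norm_num, Real.binEntropy_two_inv,
        div_self (ne_of_gt hlog2)]
    rw [e0, e1]; exact ⟨h0.le, h1⟩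
  obtain ⟨p, hp, hps⟩ := intermediate_value_Icc (by norm_num : (0:ℝ) ≤ 1/2)
    hcont.continuousOn hmem
  have hne : Set.Nonempty {p : ℝ | p ∈ Set.Icc (0:ℝ) (1/2) ∧ binEnt2 p = s} :=
    ⟨p, hp, hps⟩
  rw [invBinEnt2]
  apply le_csInf hne
  rintro b ⟨hb, hbs⟩
  by_contra hcon
  push_neg at hcon
  have hlt : binEnt2 b < binEnt2 q :=
    binEnt2_mono hb ⟨hq0.le, hq2⟩ hcon
  rw [hbs] at hlt
  linarith
end
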